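/- Let γ₁, γ₂ : Z → ℝ>0 with I* := ∫ γ₁γ₂ dν ∈ (0,∞), let α₁ ∈ (1,2] with conjugate α₂, and let Ψ : Z → ℝ>0 with ‖γ₁Ψ‖_{α₁}, ‖γ₂/Ψ‖_{α₂} ∈ (0,∞). If I* > (1-ε) ‖γ₁Ψ‖_{α₁} ‖γ₂/Ψ‖_{α₂} for some ε ∈ (0,1), then ‖ (γ₁Ψ)^{α₁}/‖γ₁Ψ‖_{α₁}^{α₁} − γ₁γ₂/I* ‖₁ < √(2ε) + ε. -/

import Mathlib

open MeasureTheory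

theorem vh_approximation_guarantee
    {Z : Type*} [MeasurableSpace Z] (ν : Measure Z)
    (γ₁ γ₂ Ψ : Z → ℝ)
    (hγ₁ : ∀ z, 0 < γ₁ z) (hγ₂ : ∀ z, 0 < γ₂ z) (hΨ : ∀ z, 0 < Ψ z)
    (hmγ₁ : Measurable γ₁) (hmγ₂ : Measurable γ₂) (hmΨ : Measurable Ψ)
    (α₁ α₂ : ℝ) (hα₁1 : 1 < α₁) (hα₁2 : α₁ ≤ 2) (hconj : 1 / α₁ + 1 / α₂ = 1)
    (hint : Integrable (fun z => γ₁ z * γ₂ z) ν)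
    (hint₁ : Integrable (fun z => (γ₁ z * Ψ z) ^ α₁) ν)
    (hint₂ : Integrable (fun z => (γ₂ z / Ψ z) ^ α₂) ν)
    (hIpos : 0 < ∫ z, γ₁ z * γ₂ z ∂ν)
    (hN₁pos : 0 < (∫ z, (γ₁ z * Ψ z) ^ α₁ ∂ν) ^ (1 / α₁))
    (hN₂pos : 0 < (∫ z, (γ₂ z / Ψ z) ^ α₂ ∂ν) ^ (1 / α₂))
    (ε : ℝ) (hε0 : 0 < ε) (hε1 : ε < 1)
    (hgap : ∫ z, γ₁ z * γ₂ z ∂ν >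
      (1 - ε) * ((∫ z, (γ₁ z * Ψ z) ^ α₁ ∂ν) ^ (1 / α₁) *
        (∫ z, (γ₂ z / Ψ z) ^ α₂ ∂ν) ^ (1 / α₂))) :
    ∫ z, |(γ₁ z * Ψ z) ^ α₁ / (∫ w, (γ₁ w * Ψ w) ^ α₁ ∂ν) -
        γ₁ z * γ₂ z / (∫ w, γ₁ w * γ₂ w ∂ν)| ∂ν
      < Real.sqrt (2 * ε) + ε := by
  have hα₁pos : (0:ℝ) < α₁ := by linarith
  have hα₂pos : (0:ℝ) < α₂ := by
    have h1 : 1/α₁ < 1 := (div_lt_one hα₁pos).mpr hα₁1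
    have h2 : 0 < 1/α₂ := by linarith
    exact (one_div_pos).mp h2
  set A := ∫ z, (γ₁ z * Ψ z) ^ α₁ ∂ν with hAdef
  set B := ∫ z, (γ₂ z / Ψ z) ^ α₂ ∂ν with hBdef
  set I := ∫ z, γ₁ z * γ₂ z ∂ν with hIdef
  have hApos : 0 < A := by
    have hA0 : 0 ≤ A := integral_nonneg fun z =>
      Real.rpow_nonneg (mul_pos (hγ₁ z) (hΨ z)).le _
    rcases hA0.lt_or_eq with h | h
    · exact h
    · exfalso
      rw [← h, Real.zero_rpow (one_div_ne_zero hα₁pos.ne')] at hN₁pos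
      exact lt_irrefl _ hN₁pos
  have hBpos : 0 < B := by
    have hB0 : 0 ≤ B := integral_nonneg fun z =>
      Real.rpow_nonneg (div_pos (hγ₂ z) (hΨ z)).le _
    rcases hB0.lt_or_eq with h | h
    · exact h
    · exfalso
      rw [← h, Real.zero_rpow (one_div_ne_zero hα₂pos.ne')] at hN₂pos
      exact lt_irrefl _ hN₂pos
  set N₁ := A ^ (1/α₁) with hN₁def
  set N₂ := B ^ (1/α₂) with hN₂def
  have hNA : N₁ ^ α₁ = A := by
    rw [hN₁def, ← Real.rpow_mul hApos.le, one_div_mul_cancel hα₁pos.ne', Real.rpow_one]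
  have hNB : N₂ ^ α₂ = B := by
    rw [hN₂def, ← Real.rpow_mul hBpos.le, one_div_mul_cancel hα₂pos.ne', Real.rpow_one]
  set f := fun z => γ₁ z * Ψ z / N₁ with hfdef
  set g := fun z => γ₂ z / Ψ z / N₂ with hgdef
  have hfpos : ∀ z, 0 < f z := fun z => by
    have := hγ₁ z; have := hΨ z; positivity
  have hgpos : ∀ z, 0 < g z := fun z => by
    have := hγ₂ z; have := hΨ z; positivity
  have hfA : ∀ z, f z ^ α₁ = (γ₁ z * Ψ z) ^ α₁ / A := fun z => by
    rw [hfdef]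
    rw [Real.div_rpow (by have := hγ₁ z; have := hΨ z; positivity) hN₁pos.le, hNA]
  have hgB : ∀ z, g z ^ α₂ = (γ₂ z / Ψ z) ^ α₂ / B := fun z => by
    rw [hgdef]
    rw [Real.div_rpow (by have := hγ₂ z; have := hΨ z; positivity) hN₂pos.le, hNB]
  have hintf : Integrable (fun z => f z ^ α₁) ν := by
    refine (integrable_congr (Filter.Eventually.of_forall fun z => (hfA z).symm)).mp
      (hint₁.div_const A)
  have hintg : Integrable (fun z => g z ^ α₂) ν := by
    refine (integrable_congr (Filter.Eventually.of_forall fun z => (hgB z).symm)).mp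
      (hint₂.div_const B)
  have h1f : ∫ z, f z ^ α₁ ∂ν = 1 := by
    simp only [hfA]
    rw [integral_div, ← hAdef, div_self hApos.ne']
  have h1g : ∫ z, g z ^ α₂ ∂ν = 1 := by
    simp only [hgB]
    rw [integral_div, ← hBdef, div_self hBpos.ne']
  have hfg : ∀ z, f z * g z = γ₁ z * γ₂ z / (N₁ * N₂) := fun z => by
    have h1 := hN₁pos.ne'
    have h2 := hN₂pos.ne'
    have h3 := (hΨ z).ne'
    rw [hfdef, hgdef]
    field_simp
  have hintfg : Integrable (fun z => f z * g z) ν := by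
    refine (integrable_congr (Filter.Eventually.of_forall fun z => (hfg z).symm)).mp
      (hint.div_const (N₁ * N₂))
  set t := I / (N₁ * N₂) with htdef
  have hN12pos : 0 < N₁ * N₂ := mul_pos hN₁pos hN₂pos
  have htpos : 0 < t := div_pos hIpos hN12pos
  have hintfgval : ∫ z, f z * g z ∂ν = t := by
    simp only [hfg]
    rw [integral_div, ← hIdef]
  have htgap : 1 - ε < t := by
    rw [htdef, lt_div_iff₀ hN12pos]
    exact hgap
  -- Young's inequality pointwise
  have hY : ∀ z, f z * g z ≤ 1/α₁ * f z ^ α₁ + 1/α₂ * g z ^ α₂ := by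
    intro z
    have h := Real.geom_mean_le_arith_mean2_weighted
      (by positivity : (0:ℝ) ≤ 1/α₁) (by positivity : (0:ℝ) ≤ 1/α₂)
      (Real.rpow_nonneg (hfpos z).le α₁) (Real.rpow_nonneg (hgpos z).le α₂) hconj
    rwa [← Real.rpow_mul (hfpos z).le, ← Real.rpow_mul (hgpos z).le,
      mul_one_div_cancel hα₁pos.ne', mul_one_div_cancel hα₂pos.ne',
      Real.rpow_one, Real.rpow_one] at h
  have ht1 : t ≤ 1 := by
    rw [← hintfgval]
    calc ∫ z, f z * g z ∂ν ≤ ∫ z, (1/α₁ * f z ^ α₁ + 1/α₂ * g z ^ α₂) ∂ν :=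
          integral_mono hintfg ((hintf.const_mul _).add (hintg.const_mul _))
            (fun z => hY z)
      _ = 1/α₁ * (∫ z, f z ^ α₁ ∂ν) + 1/α₂ * (∫ z, g z ^ α₂ ∂ν) := by
          rw [integral_add (hintf.const_mul _) (hintg.const_mul _),
            integral_const_mul, integral_const_mul]
      _ = 1 := by rw [h1f, h1g]; linarith [hconj]
  -- u and v
  set u := fun z => f z ^ (α₁/2) with hudef
  set v := fun z => f z ^ (1 - α₁/2) * g z with hvdef
  have hupos : ∀ z, 0 < u z := fun z => Real.rpow_pos_of_pos (hfpos z) _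
  have huu : ∀ z, u z ^ 2 = f z ^ α₁ := fun z => by
    rw [hudef, sq, ← Real.rpow_add (hfpos z)]
    norm_num
  have huv : ∀ z, u z * v z = f z * g z := fun z => by
    rw [hudef, hvdef, ← mul_assoc, ← Real.rpow_add (hfpos z)]
    norm_num
  have hvv : ∀ z, v z ^ 2 = f z ^ (2 - α₁) * g z ^ (2:ℕ) := fun z => by
    rw [hvdef, mul_pow, ← Real.rpow_natCast (f z ^ (1 - α₁/2)) 2,
      ← Real.rpow_mul (hfpos z).le,
      show (1 - α₁/2) * ((2:ℕ):ℝ) = 2 - α₁ by push_cast; ring]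
  have hsumw : (2 - α₁)/α₁ + 2/α₂ = 1 := by
    have h1 : (2 - α₁)/α₁ = 2 * (1/α₁) - 1 := by field_simp
    have h2 : 2/α₂ = 2 * (1/α₂) := by ring
    rw [h1, h2]; linarith [hconj]
  have hv2le : ∀ z, v z ^ 2 ≤ (2 - α₁)/α₁ * f z ^ α₁ + 2/α₂ * g z ^ α₂ := by
    intro z
    have h := Real.geom_mean_le_arith_mean2_weighted
      (div_nonneg (by linarith) hα₁pos.le) (by positivity : (0:ℝ) ≤ 2/α₂)
      (Real.rpow_nonneg (hfpos z).le α₁) (Real.rpow_nonneg (hgpos z).le α₂) hsumw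
    rw [← Real.rpow_mul (hfpos z).le, ← Real.rpow_mul (hgpos z).le] at h
    rw [hvv z]
    have e1 : α₁ * ((2 - α₁)/α₁) = 2 - α₁ := by field_simp
    have e2 : α₂ * (2/α₂) = 2 := by field_simp
    rw [e1, e2] at h
    rw [← Real.rpow_natCast (g z) 2]
    push_cast
    exact h
  -- measurability
  have hmf : Measurable f := (hmγ₁.mul hmΨ).div_const N₁
  have hmg : Measurable g := (hmγ₂.div hmΨ).div_const N₂
  have hmu : Measurable u :=
    (Real.continuous_rpow_const (by positivity : (0:ℝ) ≤ α₁/2)).measurable.comp hmf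
  have hmv : Measurable v :=
    (((Real.continuous_rpow_const (by linarith : (0:ℝ) ≤ 1 - α₁/2)).measurable.comp
      hmf)).mul hmg
  have hintu2 : Integrable (fun z => u z ^ 2) ν :=
    (integrable_congr (Filter.Eventually.of_forall fun z => (huu z).symm)).mp hintf
  have hintuv : Integrable (fun z => u z * v z) ν :=
    (integrable_congr (Filter.Eventually.of_forall fun z => (huv z).symm)).mp hintfg
  have hintv2 : Integrable (fun z => v z ^ 2) ν := by
    refine Integrable.mono' ((hintf.const_mul ((2 - α₁)/α₁)).add (hintg.const_mul (2/α₂)))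
      ((hmv.pow_const 2).aestronglyMeasurable)
      (Filter.Eventually.of_forall fun z => ?_)
    rw [Real.norm_eq_abs, abs_of_nonneg (sq_nonneg _)]
    exact hv2le z
  have hintv2le : ∫ z, v z ^ 2 ∂ν ≤ 1 := by
    calc ∫ z, v z ^ 2 ∂ν
        ≤ ∫ z, ((2 - α₁)/α₁ * f z ^ α₁ + 2/α₂ * g z ^ α₂) ∂ν :=
          integral_mono hintv2 ((hintf.const_mul _).add (hintg.const_mul _)) hv2le
      _ = (2 - α₁)/α₁ * (∫ z, f z ^ α₁ ∂ν) + 2/α₂ * (∫ z, g z ^ α₂ ∂ν) := by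
          rw [integral_add (hintf.const_mul _) (hintg.const_mul _),
            integral_const_mul, integral_const_mul]
      _ = 1 := by rw [h1f, h1g]; linarith [hsumw]
  set S := ∫ z, (u z - v z) ^ 2 ∂ν with hSdef
  have hintS : Integrable (fun z => (u z - v z) ^ 2) ν := by
    have : (fun z => (u z - v z) ^ 2)
        = fun z => u z ^ 2 - 2 * (u z * v z) + v z ^ 2 := by
      funext z; ring
    rw [this]
    exact ((hintu2.sub (hintuv.const_mul 2)).add hintv2)
  have hSnonneg : 0 ≤ S := integral_nonneg fun z => sq_nonneg _
  have hSle : S ≤ 2 * (1 - t) := by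
    have heq : S = (∫ z, u z ^ 2 ∂ν) - 2 * (∫ z, u z * v z ∂ν) + ∫ z, v z ^ 2 ∂ν := by
      rw [hSdef]
      have : (fun z => (u z - v z) ^ 2)
          = fun z => u z ^ 2 - 2 * (u z * v z) + v z ^ 2 := by
        funext z; ring
      have h3 : Integrable (fun z => u z ^ 2 - 2 * (u z * v z)) ν :=
        hintu2.sub (hintuv.const_mul 2)
      rw [this, integral_add h3 hintv2, integral_sub hintu2 (hintuv.const_mul 2),
        integral_const_mul]
    have hu2 : ∫ z, u z ^ 2 ∂ν = 1 := by
      rw [show (fun z => u z ^ 2) = fun z => f z ^ α₁ from funext huu]; exact h1f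
    have huvval : ∫ z, u z * v z ∂ν = t := by
      rw [show (fun z => u z * v z) = fun z => f z * g z from funext huv]
      exact hintfgval
    rw [heq, hu2, huvval]
    linarith [hintv2le]
  -- Cauchy–Schwarz
  have hCS : ∫ z, u z * |u z - v z| ∂ν ≤ S ^ ((1:ℝ)/2) := by
    have hconj22 : Real.HolderConjugate 2 2 := Real.holderConjugate_iff.mpr ⟨by norm_num, by norm_num⟩
    have hml1 : MemLp u (ENNReal.ofReal 2) ν := by
      rw [show ENNReal.ofReal 2 = 2 by norm_num]
      exact (memLp_two_iff_integrable_sq hmu.aestronglyMeasurable).mpr hintu2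
    have hml2 : MemLp (fun z => |u z - v z|) (ENNReal.ofReal 2) ν := by
      rw [show ENNReal.ofReal 2 = 2 by norm_num]
      refine (memLp_two_iff_integrable_sq ((hmu.sub hmv).abs.aestronglyMeasurable)).mpr ?_
      refine (integrable_congr (Filter.Eventually.of_forall fun z => ?_)).mp hintS
      rw [sq_abs]; rfl
    have h := integral_mul_le_Lp_mul_Lq_of_nonneg hconj22
      (Filter.Eventually.of_forall fun z => (hupos z).le)
      (Filter.Eventually.of_forall fun z => abs_nonneg _) hml1 hml2
    have e1 : ∫ z, u z ^ (2:ℝ) ∂ν = 1 := by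
      rw [show (fun z => u z ^ (2:ℝ)) = fun z => u z ^ 2 by
        funext z; rw [Real.rpow_two]]
      rw [show (fun z => u z ^ 2) = fun z => f z ^ α₁ from funext huu]; exact h1f
    have e2 : ∫ z, |u z - v z| ^ (2:ℝ) ∂ν = S := by
      rw [hSdef]
      congr 1; funext z
      rw [Real.rpow_two, sq_abs]
    rw [e1, e2] at h
    rwa [Real.one_rpow, one_mul] at h
  have habsle : ∫ z, |f z ^ α₁ - f z * g z| ∂ν ≤ S ^ ((1:ℝ)/2) := by
    refine le_trans (le_of_eq ?_) hCS
    refine integral_congr_ae (Filter.Eventually.of_forall fun z => ?_)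
    show |f z ^ α₁ - f z * g z| = u z * |u z - v z|
    have : f z ^ α₁ - f z * g z = u z * (u z - v z) := by
      rw [← huu z, ← huv z]; ring
    rw [this, abs_mul, abs_of_nonneg (hupos z).le]
  have hSsqrt : S ^ ((1:ℝ)/2) < Real.sqrt (2 * ε) := by
    rw [← Real.sqrt_eq_rpow]
    apply Real.sqrt_lt_sqrt hSnonneg
    linarith [htgap, hSle]
  -- final assembly
  have hgoal_eq : ∀ z, |(γ₁ z * Ψ z) ^ α₁ / A - γ₁ z * γ₂ z / I|
      = |f z ^ α₁ - f z * g z / t| := by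
    intro z
    have hfgt : f z * g z / t = γ₁ z * γ₂ z / I := by
      rw [hfg, htdef]
      rw [div_div_div_cancel_right₀ hN12pos.ne']
    rw [hfA z, hfgt]
  have hintabs : Integrable (fun z => |f z ^ α₁ - f z * g z|) ν :=
    (hintf.sub hintfg).abs
  have hptle : ∀ z, |f z ^ α₁ - f z * g z / t|
      ≤ |f z ^ α₁ - f z * g z| + (f z * g z / t - f z * g z) := by
    intro z
    have h1 : f z * g z ≤ f z * g z / t := by
      rw [le_div_iff₀ htpos]
      exact mul_le_of_le_one_right (mul_pos (hfpos z) (hgpos z)).le ht1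
    calc |f z ^ α₁ - f z * g z / t|
        = |(f z ^ α₁ - f z * g z) + (f z * g z - f z * g z / t)| := by
          congr 1; ring
      _ ≤ |f z ^ α₁ - f z * g z| + |f z * g z - f z * g z / t| := abs_add_le _ _
      _ = |f z ^ α₁ - f z * g z| + (f z * g z / t - f z * g z) := by
          rw [abs_sub_comm (f z * g z) (f z * g z / t),
            abs_of_nonneg (by linarith : (0:ℝ) ≤ f z * g z / t - f z * g z)]
  calc ∫ z, |(γ₁ z * Ψ z) ^ α₁ / A - γ₁ z * γ₂ z / I| ∂ν
      = ∫ z, |f z ^ α₁ - f z * g z / t| ∂ν :=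
        integral_congr_ae (Filter.Eventually.of_forall fun z => hgoal_eq z)
    _ ≤ ∫ z, (|f z ^ α₁ - f z * g z| + (f z * g z / t - f z * g z)) ∂ν := by
        refine integral_mono_of_nonneg (Filter.Eventually.of_forall fun z => abs_nonneg _)
          (hintabs.add ((hintfg.div_const t).sub hintfg))
          (Filter.Eventually.of_forall fun z => hptle z)
    _ = (∫ z, |f z ^ α₁ - f z * g z| ∂ν) + (t/t - t) := by
        have hint2' : Integrable (fun z => f z * g z / t - f z * g z) ν :=
          (hintfg.div_const t).sub hintfg
        rw [integral_add hintabs hint2', integral_sub (hintfg.div_const t) hintfg,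
          integral_div, hintfgval]
    _ < Real.sqrt (2 * ε) + ε := by
        rw [div_self htpos.ne']
        have := lt_of_le_of_lt habsle hSsqrt
        linarith [htgap]
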